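/- arXiv:2605.16096 — 5 statements merged into one kernel-verified Lean document; each statement's English description precedes it below -/
import Mathlib

section
/- Let X be a median algebra (a set with a ternary operation m that is symmetric, satisfies m(a,b,b)=b, and m(m(a,b,d),c,d)=m(m(a,c,d),b,d)). Then for every triple x,y,z in X, the intersection of the three intervals [x,y], [y,z], [x,z] is exactly the singleton {m(x,y,z)}, where [a,b] := {c : m(a,c,b)=c}. -/
/-- A median algebra: a set with a ternary operation `m` that is symmetric
(generated by the two transpositions), satisfies `m a b b = b`, and
`m (m a b d) c d = m (m a c d) b d`. -/
structure MedianAlgebra (X : Type*) where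
  m : X → X → X → X
  swap12 : ∀ a b c, m a b c = m b a c
  swap23 : ∀ a b c, m a b c = m a c b
  absorb : ∀ a b, m a b b = b
  med_assoc : ∀ a b c d, m (m a b d) c d = m (m a c d) b d

namespace MedianAlgebra

variable {X : Type*}

/-- The median interval `[a,b] = {c : m a c b = c}`. -/
def interval (M : MedianAlgebra X) (a b : X) : Set X := {c | M.m a c b = c}

/-- A subset is convex if it contains the interval between any two of its points. -/
def IsConvex (M : MedianAlgebra X) (C : Set X) : Prop :=
  ∀ x ∈ C, ∀ y ∈ C, M.interval x y ⊆ C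

/-- The shadow `S^a_b = {w : m a w b = b}` (i.e. `b ∈ [a,w]`). -/
def shadow (M : MedianAlgebra X) (a b : X) : Set X := {w | M.m a w b = b}

/-- The branch `B^a_b = {w : m a w b ≠ b}`, complement of the shadow. -/
def branch (M : MedianAlgebra X) (a b : X) : Set X := {w | M.m a w b ≠ b}

/-- The relation `x ≤_u y` iff `m u x y = x`. -/
def leI (M : MedianAlgebra X) (u x y : X) : Prop := M.m u x y = x

/-- `[u,v]` is a chain interval: `≤_u` is total on `[u,v]` and the
order-median induced by `≤_u` agrees with `m` on `[u,v]`. -/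
def IsChainInterval (M : MedianAlgebra X) (u v : X) : Prop :=
  (∀ x ∈ M.interval u v, ∀ y ∈ M.interval u v, M.leI u x y ∨ M.leI u y x) ∧
  (∀ x ∈ M.interval u v, ∀ y ∈ M.interval u v, ∀ z ∈ M.interval u v,
      M.leI u x y → M.leI u y z → M.m x y z = y)

end MedianAlgebra

section Helpers

variable {X : Type*} (M : MedianAlgebra X)

/-- Swap the first and third arguments. -/
lemma MedianAlgebra.swap13 (a b c : X) : M.m a b c = M.m c b a := by
  rw [M.swap12, M.swap23, M.swap12]

/-- `m a a b = a`. -/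
lemma MedianAlgebra.absorb' (a b : X) : M.m a a b = a := by
  rw [M.swap13, M.absorb]

/-- `m a b a = a`. -/
lemma MedianAlgebra.absorb'' (a b : X) : M.m a b a = a := by
  rw [M.swap23, M.absorb']

/-- The median lies in the interval: `m a (m a b c) b = m a b c`. -/
lemma MedianAlgebra.median_mem (a b c : X) : M.m a (M.m a b c) b = M.m a b c := by
  rw [M.swap12 a (M.m a b c) b, M.swap23 a b c, M.med_assoc a c a b, M.absorb', M.swap23]

end Helpers

open MedianAlgebra

/-- The three intervals of a triple intersect exactly in the median. -/
theorem median_interval_intersection {X : Type*} (M : MedianAlgebra X) (x y z : X) :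
    M.interval x y ∩ M.interval y z ∩ M.interval x z = {M.m x y z} := by
  ext w
  simp only [Set.mem_inter_iff, Set.mem_singleton_iff, MedianAlgebra.interval,
    Set.mem_setOf_eq]
  constructor
  · rintro ⟨⟨h1, h2⟩, h3⟩
    set p := M.m x y z with hp
    -- Step A : m p w y = w
    have hA : M.m p w y = w := by
      have e : M.m x y z = M.m z x y := by rw [M.swap12 z x y, M.swap23 x z y]
      rw [hp, e, M.med_assoc z x w y, M.swap13 z w y, h2, M.swap12, h1]
    -- Step B : m p w x = w
    have hB : M.m p w x = w := by
      have e : M.m x y z = M.m z y x := M.swap13 x y z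
      rw [hp, e, M.med_assoc z y w x, M.swap13 z w x, h3, M.swap13 w y x,
        M.swap23 x y w, h1]
    -- Step C : conclude
    have hxyp : M.m x y p = p := by rw [M.swap23 x y p, hp, M.median_mem]
    have hxwp : M.m x w p = w := by rw [M.swap13 x w p, hB]
    have key := M.med_assoc x y w p
    rw [hxyp, hxwp, M.swap23 p w p, M.absorb'] at key
    rw [M.swap12 w y p, M.swap13 y w p, hA] at key
    exact key.symm
  · rintro rfl
    refine ⟨⟨M.median_mem x y z, ?_⟩, ?_⟩
    · have e : M.m x y z = M.m y z x := by rw [M.swap12 x y z, M.swap23 y x z]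
      rw [e]; exact M.median_mem y z x
    · have e : M.m x y z = M.m x z y := M.swap23 x y z
      rw [e]; exact M.median_mem x z y
end

section
/- Let X be a median algebra and let u ≠ v be such that that interval [u,v] is a chain (linearly ordered by ≤_u, where x ≤_u y iff m(u,x,y)=x). Define the branch B^u_v := {x ∈ X : m(u,x,v) ≠ v}. Then B^u_v and its complement S^u_v := {x : m(u,x,v)=v} are both convex subsets of X; i.e., B^u_v is a halfspace. -/
open MedianAlgebra

namespace MedianAlgebra

variable {X : Type*}

/-- Idempotence: `m a a b = a`. -/
theorem idem (M : MedianAlgebra X) (a b : X) : M.m a a b = a :=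
  ((M.swap23 a a b).trans (M.swap12 a b a)).trans (M.absorb b a)

/-- Associativity of the meet `a ⊓_d b := m a b d`. -/
theorem assocm (M : MedianAlgebra X) (a b c d : X) :
    M.m (M.m a b d) c d = M.m a (M.m b c d) d := by
  calc M.m (M.m a b d) c d
      = M.m (M.m b a d) c d := congrArg (fun w => M.m w c d) (M.swap12 a b d)
    _ = M.m (M.m b c d) a d := M.med_assoc b a c d
    _ = M.m a (M.m b c d) d := M.swap12 _ a d

/-- Key lemma F: `m x z y` lies `≥_d` the meet `x ⊓_d y`, as an identity. -/
theorem lemF (M : MedianAlgebra X) (x y z d : X) :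
    M.m (M.m x y d) (M.m x z y) d = M.m x y d :=
  (((((((((((((((((((((((((congrArg (fun w => (M.m w (M.m x z y) d)) (M.swap12 x y d)).trans (congrArg (fun w => (M.m (M.m w x d) (M.m x z y) d)) ((M.absorb d y).symm))).trans (congrArg (fun w => (M.m (M.m w x d) (M.m x z y) d)) (M.swap12 d y y))).trans (congrArg (fun w => (M.m (M.m w x d) (M.m x z y) d)) (M.swap23 y d y))).trans (congrArg (fun w => (M.m w (M.m x z y) d)) (M.med_assoc y y x d))).trans (M.med_assoc (M.m y x d) y (M.m x z y) d)).trans (congrArg (fun w => (M.m w y d)) (M.swap12 (M.m y x d) (M.m x z y) d))).trans (M.med_assoc (M.m x z y) (M.m y x d) y d)).trans (M.swap23 (M.m (M.m x z y) y d) (M.m y x d) d)).trans (congrArg (fun w => (M.m w d (M.m y x d))) (M.swap23 (M.m x z y) y d))).trans (congrArg (fun w => (M.m w d (M.m y x d))) (M.med_assoc x z d y))).trans (congrArg (fun w => (M.m w d (M.m y x d))) (M.swap12 (M.m x d y) z y))).trans (congrArg (fun w => (M.m w d (M.m y x d))) (M.swap23 z (M.m x d y) y))).trans (congrArg (fun w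 => (M.m w d (M.m y x d))) (M.swap12 z y (M.m x d y)))).trans (congrArg (fun w => (M.m (M.m y z w) d (M.m y x d))) (M.swap23 x d y))).trans (congrArg (fun w => (M.m (M.m y z w) d (M.m y x d))) (M.swap12 x y d))).trans (M.med_assoc y z d (M.m y x d))).trans (M.swap12 (M.m y d (M.m y x d)) z (M.m y x d))).trans (congrArg (fun w => (M.m z w (M.m y x d))) (M.swap23 y d (M.m y x d)))).trans (congrArg (fun w => (M.m z w (M.m y x d))) (M.swap12 y (M.m y x d) d))).trans (congrArg (fun w => (M.m z w (M.m y x d))) (M.med_assoc y x y d))).trans ((congrArg (fun w => (M.m z (M.m w x d) (M.m y x d))) (M.swap23 y d y)).symm)).trans ((congrArg (fun w => (M.m z (M.m w x d) (M.m y x d))) (M.swap12 d y y)).symm)).trans ((congrArg (fun w => (M.m z (M.m w x d) (M.m y x d))) ((M.absorb d y).symm)).symm)).trans (((M.absorb z (M.m y x d)).symm).symm)).trans ((M.swap12 x y d).symm)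

/-- The gate projection `m u w v` lies in the interval `[u,v]`. -/
theorem phi_mem (M : MedianAlgebra X) (u v w : X) :
    M.m u (M.m u w v) v = M.m u w v := by
  calc M.m u (M.m u w v) v
      = M.m (M.m u w v) u v := M.swap12 _ _ _
    _ = M.m (M.m u u v) w v := M.med_assoc u w u v
    _ = M.m u w v := congrArg (fun t => M.m t w v) (M.idem u v)

/-- `(a ⊓ b) ⊓ (a ⊓ c) = a ⊓ (b ⊓ c)` for the meet at base `v`. -/
theorem meet4 (M : MedianAlgebra X) (a b c v : X) :
    M.m (M.m a b v) (M.m a c v) v = M.m a (M.m b c v) v := by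
  calc M.m (M.m a b v) (M.m a c v) v
      = M.m (M.m a (M.m a c v) v) b v := M.med_assoc a b (M.m a c v) v
    _ = M.m (M.m (M.m a c v) a v) b v :=
        congrArg (fun w => M.m w b v) (M.swap12 a (M.m a c v) v)
    _ = M.m (M.m (M.m a a v) c v) b v :=
        congrArg (fun w => M.m w b v) (M.med_assoc a c a v)
    _ = M.m (M.m a c v) b v := by rw [M.idem a v]
    _ = M.m (M.m a b v) c v := M.med_assoc a c b v
    _ = M.m (M.m b a v) c v := congrArg (fun w => M.m w c v) (M.swap12 a b v)
    _ = M.m (M.m b c v) a v := M.med_assoc b a c v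
    _ = M.m a (M.m b c v) v := M.swap12 _ _ _

end MedianAlgebra

/-- If `[u,v]` is a nontrivial chain interval then the branch `B^u_v` and its
complementary shadow `S^u_v` are both convex, i.e. `B^u_v` is a halfspace. -/
theorem branch_isHalfspace {X : Type*} (M : MedianAlgebra X) (u v : X)
    (huv : u ≠ v) (hch : M.IsChainInterval u v) :
    M.IsConvex (M.branch u v) ∧ M.IsConvex (M.shadow u v) := by
  constructor
  · -- branch is convex
    intro x hx y hy z hz
    simp only [branch, Set.mem_setOf_eq] at hx hy ⊢
    simp only [interval, Set.mem_setOf_eq] at hz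
    intro hzv
    -- First: (m u x v) ⊓_v (m u y v) = v
    have hQz : M.m (M.m x y v) z v = M.m x y v := by
      have h := M.lemF x y z v
      rwa [hz] at h
    have claimv : M.m (M.m u x v) (M.m u y v) v = v := by
      calc M.m (M.m u x v) (M.m u y v) v
          = M.m u (M.m x y v) v := M.meet4 u x y v
        _ = M.m (M.m x y v) u v := M.swap12 _ _ _
        _ = M.m (M.m (M.m x y v) z v) u v :=
            congrArg (fun w => M.m w u v) hQz.symm
        _ = M.m (M.m (M.m x y v) u v) z v := M.med_assoc (M.m x y v) z u v
        _ = M.m (M.m u (M.m x y v) v) z v :=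
            congrArg (fun w => M.m w z v) (M.swap12 (M.m x y v) u v)
        _ = M.m (M.m u z v) (M.m x y v) v := M.med_assoc u (M.m x y v) z v
        _ = M.m v (M.m x y v) v := congrArg (fun w => M.m w (M.m x y v) v) hzv
        _ = M.m (M.m x y v) v v := M.swap12 _ _ _
        _ = v := M.absorb _ _
    have hx1 : M.m u x v ∈ M.interval u v := M.phi_mem u v x
    have hy1 : M.m u y v ∈ M.interval u v := M.phi_mem u v y
    have hv1 : v ∈ M.interval u v := M.absorb u v
    rcases hch.1 _ hx1 _ hy1 with h | h
    · have hmid := hch.2 _ hx1 _ hy1 _ hv1 h hy1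
      -- hmid : m (m u x v) (m u y v) v = m u y v
      exact hy (hmid.symm.trans claimv)
    · have hmid := hch.2 _ hy1 _ hx1 _ hv1 h hx1
      have claimv' : M.m (M.m u y v) (M.m u x v) v = v :=
        (M.swap12 _ _ _).trans claimv
      exact hx (hmid.symm.trans claimv')
  · -- shadow is convex
    intro x hx y hy z hz
    simp only [shadow, Set.mem_setOf_eq] at hx hy ⊢
    simp only [interval, Set.mem_setOf_eq] at hz
    have hx' : M.m x v u = v := by
      calc M.m x v u = M.m x u v := M.swap23 _ _ _
        _ = M.m u x v := (M.swap12 u x v).symm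
        _ = v := hx
    have hy' : M.m y v u = v := by
      calc M.m y v u = M.m y u v := M.swap23 _ _ _
        _ = M.m u y v := (M.swap12 u y v).symm
        _ = v := hy
    have hP : M.m v (M.m x y u) u = v := by
      calc M.m v (M.m x y u) u
          = M.m (M.m x y u) v u := M.swap12 _ _ _
        _ = M.m (M.m x v u) y u := M.med_assoc x y v u
        _ = M.m v y u := congrArg (fun w => M.m w y u) hx'
        _ = M.m y v u := M.swap12 _ _ _
        _ = v := hy'
    have hQ : M.m (M.m x y u) z u = M.m x y u := by
      have h := M.lemF x y z u
      rwa [hz] at h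
    calc M.m u z v = M.m z u v := M.swap12 _ _ _
      _ = M.m z v u := M.swap23 _ _ _
      _ = M.m v z u := M.swap12 _ _ _
      _ = M.m (M.m v (M.m x y u) u) z u := congrArg (fun w => M.m w z u) hP.symm
      _ = M.m v (M.m (M.m x y u) z u) u := M.assocm v (M.m x y u) z u
      _ = M.m v (M.m x y u) u := congrArg (fun w => M.m v w u) hQ
      _ = v := hP
end

section
/- Let X be a median algebra and [u,v] a chain interval ordered by ≤_u. For c,d ∈ [u,v], the preimages under the gate retraction φ_{u,v}(z)=m(u,z,v) of the open rays satisfy: φ_{u,v}^{-1}({t ∈ [u,v] : t <_u d}) = B^u_d and φ_{u,v}^{-1}({t ∈ [u,v] : c <_u t}) = B^v_c. -/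
namespace MedianAlgebra

lemma swap13_s10 {X : Type*} (M : MedianAlgebra X) (a b c : X) :
    M.m a b c = M.m c b a := by
  rw [M.swap23, M.swap12, M.swap23]

lemma m_self_left {X : Type*} (M : MedianAlgebra X) (a b : X) :
    M.m a a b = a := by
  rw [M.swap23, M.swap12, M.absorb]

lemma gate_proj {X : Type*} (M : MedianAlgebra X) {u v d : X} (z : X)
    (hd : M.m u d v = d) : M.m u (M.m u z v) d = M.m u z d := by
  have h1 : M.m v d u = d := by rw [M.swap13_s10, hd]
  have h := M.med_assoc v z d u
  rw [h1] at h
  have e1 : M.m v z u = M.m u z v := M.swap13_s10 v z u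
  rw [e1] at h
  calc M.m u (M.m u z v) d = M.m u d (M.m u z v) := M.swap23 _ _ _
    _ = M.m (M.m u z v) d u := M.swap13_s10 _ _ _
    _ = M.m d z u := h
    _ = M.m u z d := M.swap13_s10 _ _ _

end MedianAlgebra

open MedianAlgebra

/-- Preimages of the open rays of a chain interval under the gate retraction
are branches: `φ_{u,v}⁻¹({t : t <_u d}) = B^u_d` and
`φ_{u,v}⁻¹({t : c <_u t}) = B^v_c`. -/
theorem preimage_rays_eq_branches {X : Type*} (M : MedianAlgebra X) (u v c d : X)
    (hch : M.IsChainInterval u v)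
    (hc : c ∈ M.interval u v) (hd : d ∈ M.interval u v) :
    {z : X | M.leI u (M.m u z v) d ∧ M.m u z v ≠ d} = M.branch u d ∧
    {z : X | M.leI u c (M.m u z v) ∧ M.m u z v ≠ c} = M.branch v c := by
  obtain ⟨htot, hmed⟩ := hch
  have hu : u ∈ M.interval u v := M.m_self_left u v
  have hv : v ∈ M.interval u v := M.absorb u v
  constructor
  · ext z
    have hφ : M.m u (M.m u z v) v = M.m u z v := M.gate_proj z (M.absorb u v)
    have key : M.m u (M.m u z v) d = M.m u z d := M.gate_proj z hd
    simp only [Set.mem_setOf_eq, branch, leI]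
    constructor
    · rintro ⟨hle, hne⟩
      rw [← key, hle]
      exact hne
    · intro h
      rw [← key] at h
      have := htot (M.m u z v) hφ d hd
      rcases this with h1 | h1
      · refine ⟨h1, fun e => h ?_⟩
        rw [e]; exact M.absorb u d
      · exact absurd ((M.swap23 u (M.m u z v) d).trans h1) h
  · ext z
    have hφ : M.m u (M.m u z v) v = M.m u z v := M.gate_proj z (M.absorb u v)
    have hcu : M.m v c u = c := by rw [M.swap13_s10]; exact hc
    have hzvu : M.m v z u = M.m u z v := M.swap13_s10 v z u
    have key : M.m v (M.m u z v) c = M.m v z c := by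
      have := M.gate_proj (u := v) (v := u) (d := c) z hcu
      rwa [hzvu] at this
    simp only [Set.mem_setOf_eq, branch, leI]
    constructor
    · rintro ⟨hle, hne⟩
      have hchain : M.m c (M.m u z v) v = M.m u z v := hmed c hc _ hφ v hv hle hφ
      rw [← key]
      have : M.m v (M.m u z v) c = M.m c (M.m u z v) v := M.swap13_s10 _ _ _
      rw [this, hchain]
      exact hne
    · intro h
      rw [← key] at h
      rcases htot c hc (M.m u z v) hφ with h1 | h1
      · refine ⟨h1, fun e => h ?_⟩
        rw [e]; exact M.absorb v c
      · exfalso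
        have hchain : M.m (M.m u z v) c v = c := hmed _ hφ c hc v hv h1 hc
        apply h
        calc M.m v (M.m u z v) c = M.m v c (M.m u z v) := M.swap23 _ _ _
          _ = M.m (M.m u z v) c v := M.swap13_s10 _ _ _
          _ = c := hchain
end

section
/- Let X be a median algebra satisfying: for every two distinct points x,y ∈ X there exist c,d ∈ [x,y] with c ≠ d, c ∈ [x,d], d ∈ [c,y], and [c,d] a chain (chain-solvability). Then X satisfies the median T₂ property: for every distinct x,y ∈ X there exists a nontrivial chain interval [u,v] such that {m(u,x,v), m(u,y,v)} = {u,v}. Conversely, the median T₂ property implies chain-solvability. -/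
open MedianAlgebra


namespace MedianAlgebra

variable {X : Type*} (M : MedianAlgebra X)

lemma p231 (a b c : X) : M.m a b c = M.m b c a :=
  (M.swap12 a b c).trans (M.swap23 b a c)

lemma p312 (a b c : X) : M.m a b c = M.m c a b :=
  (M.swap23 a b c).trans (M.swap12 a c b)

lemma p321 (a b c : X) : M.m a b c = M.m c b a :=
  (M.swap12 a b c).trans ((M.swap23 b a c).trans (M.swap12 b c a))

lemma maab (a b : X) : M.m a a b = a := (M.p312 a a b).trans (M.absorb b a)

lemma maba (a b : X) : M.m a b a = a := (M.swap23 a b a).trans (M.maab a b)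

lemma assocP (a b c p : X) : M.m (M.m a b p) c p = M.m a (M.m b c p) p := by
  rw [M.swap12 a b p, M.med_assoc b a c p, M.swap12 (M.m b c p) a p]

lemma H1 (a b c : X) : M.m a (M.m a b c) c = M.m a b c := by
  rw [M.swap12 a (M.m a b c) c, M.med_assoc a b a c, M.maab a c]

lemma E1 (p z q : X) : M.m p (M.m p z q) z = M.m p z q := by
  rw [M.swap23 p z q, M.swap12 p (M.m p q z) z, M.med_assoc p q p z, M.maab p z,
    M.swap23 p q z]

lemma U {a b c z : X} (h1 : M.m a z b = z) (h2 : M.m b z c = z)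
    (h3 : M.m a z c = z) : M.m a b c = z := by
  set t := M.m a b c with ht
  have s1 : M.m a z t = z := by
    rw [ht, M.p321 a z (M.m a b c), M.p231 a b c, M.med_assoc b c z a,
      M.p321 b z a, h1, M.p312 z c a, h3]
  have s2 : M.m t z b = z := by
    rw [ht, M.swap23 a b c, M.med_assoc a c z b, h1, M.p312 z c b, h2]
  have s3 : M.m a b t = t := by
    rw [ht, M.swap23 a b (M.m a b c), ← M.swap23 a c b]
    exact M.H1 a c b
  have key : M.m z (M.m a b t) t = z := by
    rw [M.swap12 z (M.m a b t) t, M.med_assoc a b z t, s1, M.p312 z b t, s2]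
  rw [s3, M.absorb z t] at key
  exact key

lemma G {p q t : X} (z : X) (h : M.m p t q = t) :
    M.m z (M.m p z q) t = M.m p z q := by
  have e1 : M.m (M.m p z q) p z = M.m p z q := by
    rw [M.swap12 (M.m p z q) p z, M.E1 p z q]
  have s0 : M.m p (M.m p t q) z = M.m t (M.m p z q) p := by
    rw [M.p231 p (M.m p t q) z, M.p231 p t q, M.assocP t q z p, M.p321 q z p]
  have s1 : M.m p t z = M.m t (M.m p z q) p := by rw [← s0, h]
  calc M.m z (M.m p z q) t
      = M.m (M.m p z q) t z := M.p231 z (M.m p z q) t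
    _ = M.m (M.m (M.m p z q) p z) t z := by rw [e1]
    _ = M.m (M.m p z q) (M.m p t z) z := M.assocP (M.m p z q) p t z
    _ = M.m (M.m p z q) (M.m t (M.m p z q) p) z := by rw [s1]
    _ = M.m (M.m t (M.m p z q) p) z (M.m p z q) :=
        M.p231 (M.m p z q) (M.m t (M.m p z q) p) z
    _ = M.m (M.m t p (M.m p z q)) z (M.m p z q) := by
        rw [M.swap23 t (M.m p z q) p]
    _ = M.m t (M.m p z (M.m p z q)) (M.m p z q) := M.assocP t p z (M.m p z q)
    _ = M.m t (M.m p (M.m p z q) z) (M.m p z q) := by rw [M.swap23 p z (M.m p z q)]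
    _ = M.m t (M.m p z q) (M.m p z q) := by rw [M.E1 p z q]
    _ = M.m p z q := M.absorb t (M.m p z q)

lemma convex {a b c d z : X} (hc : M.m a c b = c) (hd : M.m a d b = d)
    (hz : M.m c z d = z) : M.m a z b = z := by
  have g1 : M.m z (M.m a z b) c = M.m a z b := M.G z hc
  have g2 : M.m z (M.m a z b) d = M.m a z b := M.G z hd
  have hz' : M.m c d z = z := by rw [← M.swap23 c z d, hz]
  have : M.m (M.m a z b) (M.m c d z) z = z := by
    rw [hz', M.absorb (M.m a z b) z]
  rw [← M.assocP (M.m a z b) c d z, M.p312 (M.m a z b) c z, g1,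
    M.p312 (M.m a z b) d z, g2] at this
  exact this.symm ▸ rfl

lemma totT {u v x y z w : X} (hu : (M.m u x v) = u) (hv : (M.m u y v) = v)
    (hz : (M.m (M.m x u y) z (M.m x v y)) = z) (hw : (M.m (M.m x u y) w (M.m x v y)) = w)
    (hzw : (M.m u (M.m u z v) (M.m u w v)) = (M.m u z v)) :
    (M.m (M.m x u y) z w) = z := by
  have e0 : (M.m x v y) = (M.m v x y) := (((M.swap12 x v y)).symm).symm
  have e1 : z = (M.m (M.m v x y) (M.m x u y) z) := ((((hz).symm).trans ((((M.swap23 (M.m x u y) z (M.m x v y))).symm).symm)).trans ((((congr (congr (congrArg M.m rfl) e0) rfl)).symm).symm)).trans ((((M.swap12 (M.m x u y) (M.m v x y) z)).symm).symm)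
  have e2 : y = (M.m u y y) := ((M.absorb u y)).symm
  have e3 : (M.m v y y) = y := (((congr (congr (congrArg M.m rfl) e2) e2)).trans ((M.absorb v (M.m u y y)))).trans ((M.absorb u y))
  have e4 : (M.m x (M.m v x y) y) = (M.m v x y) := (M.G x e3)
  have e5 : (M.m x u y) = (M.m (M.m x u y) u (M.m x v y)) := ((((((M.G u e4)).symm).trans (((M.swap23 u (M.m v x y) (M.m x u y))).symm)).trans (((congr (congr (congrArg M.m rfl) e0) rfl)).symm)).trans (((M.swap23 u (M.m x u y) (M.m x v y))).symm)).trans ((((M.swap12 u (M.m x u y) (M.m x v y))).symm).symm)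
  have e6 : w = (M.m (M.m x u y) w (M.m x v y)) := (hw).symm
  have e7 : x = (M.m u x x) := ((M.absorb u x)).symm
  have e8 : (M.m (M.m x u y) (M.m u x x) (M.m x v y)) = (M.m x (M.m x u y) (M.m v x y)) := ((((((((congr (congr (congrArg M.m rfl) e7) rfl)).symm).trans ((((M.swap23 (M.m x u y) x (M.m x v y))).symm).symm)).trans ((((M.swap12 (M.m x u y) (M.m x v y) x)).symm).symm)).trans ((((congr (congr (congrArg M.m e0) rfl) rfl)).symm).symm)).trans ((((M.swap23 (M.m v x y) (M.m x u y) x)).symm).symm)).trans ((((M.swap12 (M.m v x y) x (M.m x u y))).symm).symm)).trans (((M.swap23 x (M.m x u y) (M.m v x y))).symm)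
  have e9 : (M.m x v y) = (M.m (M.m u x x) v (M.m u y y)) := (((congr (congr (congrArg M.m e7) rfl) e2)).symm).symm
  have e10 : (M.m x u y) = (M.m (M.m u x x) u (M.m u y y)) := (((congr (congr (congrArg M.m e7) rfl) e2)).symm).symm
  have e11 : x = (M.m (M.m u x x) (M.m u x x) (M.m u y y)) := (((((((M.absorb u x)).symm).trans (((M.absorb (M.m u y y) (M.m u x x))).symm)).trans (((congr (congr (congrArg M.m e2) e7) e7)).symm)).trans (((M.swap12 x y x)).symm)).trans (((M.swap23 x x y)).symm)).trans ((((congr (congr (congrArg M.m e7) e7) e2)).symm).symm)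
  have e12 : (M.m x u y) = (M.m (M.m u x x) (M.m x u y) (M.m u y y)) := (((((((congr (congr (congrArg M.m e11) rfl) e2)).symm).symm).trans (((M.med_assoc (M.m u x x) u (M.m u x x) (M.m u y y))).symm)).trans (((congr (congr (congrArg M.m e10) e7) e2)).symm)).trans (((M.swap12 x (M.m x u y) y)).symm)).trans ((((congr (congr (congrArg M.m e7) rfl) e2)).symm).symm)
  have e13 : v = (M.m v u y) := (((hv).symm).trans ((((M.swap23 u y v)).symm).symm)).trans ((((M.swap12 u v y)).symm).symm)
  have e14 : (M.m x v y) = (M.m y (M.m v x y) (M.m x u y)) := (((((((((((((((((((((M.swap12 x v y)).symm).symm).trans ((((congr (congr (congrArg M.m e13) rfl) rfl)).symm).symm)).trans ((((M.med_assoc v u x y)).symm).symm)).trans ((((M.swap23 (M.m v x y) u y)).symm).symm)).trans ((((M.swap12 (M.m v x y) y u)).symm).symm)).trans (((M.swap23 y u (M.m v x y))).symm)).trans (((congr (congr (congrArg M.m rfl) rfl) e0)).symm)).trans (((M.swap12 u y (M.m x v y))).symm)).trans ((((M.swap23 u y (M.m x v y))).symm).symm)).trans ((((M.swap12 u (M.m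 x v y) y)).symm).symm)).trans ((((congr (congr (congrArg M.m e9) rfl) e2)).symm).symm)).trans (((M.med_assoc (M.m u x x) u v (M.m u y y))).symm)).trans (((congr (congr (congrArg M.m e10) rfl) e2)).symm)).trans ((((congr (congr (congrArg M.m e12) rfl) e2)).symm).symm)).trans (((M.med_assoc (M.m u x x) v (M.m x u y) (M.m u y y))).symm)).trans (((congr (congr (congrArg M.m e9) rfl) e2)).symm)).trans ((((congr (congr (congrArg M.m e0) rfl) rfl)).symm).symm)).trans ((((M.swap23 (M.m v x y) (M.m x u y) y)).symm).symm)).trans (((M.swap12 y (M.m v x y) (M.m x u y))).symm)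
  have e15 : (M.m x u y) = (M.m y x (M.m x u y)) := ((((((((congr (congr (congrArg M.m e11) rfl) e2)).symm).symm).trans (((M.med_assoc (M.m u x x) u (M.m u x x) (M.m u y y))).symm)).trans (((congr (congr (congrArg M.m e10) e7) e2)).symm)).trans (((M.swap12 x (M.m x u y) y)).symm)).trans (((M.swap23 x y (M.m x u y))).symm)).trans ((((M.swap12 x y (M.m x u y))).symm).symm)
  have e16 : (M.m x u y) = (M.m x (M.m x u y) (M.m v x y)) := (((((((((((((((M.absorb (M.m x v y) (M.m x u y))).symm).trans (((M.swap12 (M.m x u y) (M.m x v y) (M.m x u y))).symm)).trans ((((congr (congr (congrArg M.m e15) e0) rfl)).symm).symm)).trans ((((M.med_assoc y x (M.m v x y) (M.m x u y))).symm).symm)).trans (((congr (congr (congrArg M.m e14) rfl) rfl)).symm)).trans (((M.swap12 x (M.m x v y) (M.m x u y))).symm)).trans (((M.swap23 x (M.m x u y) (M.m x v y))).symm)).trans ((((M.swap12 x (M.m x u y) (M.m x v y))).symm).symm)).trans ((((M.swap23 (M.m x u y) x (M.m x v y))).symm).symm)).trans ((((M.swap12 (M.m x u y) (M.m x v y) x)).symm).symm)).trans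 ((((congr (congr (congrArg M.m e0) rfl) rfl)).symm).symm)).trans ((((M.swap23 (M.m v x y) (M.m x u y) x)).symm).symm)).trans ((((M.swap12 (M.m v x y) x (M.m x u y))).symm).symm)).trans (((M.swap23 x (M.m x u y) (M.m v x y))).symm)
  have e17 : w = (M.m (M.m v x y) w x) := ((((((((hw).symm).trans ((((congr (congr (congrArg M.m e16) rfl) e0)).symm).symm)).trans (((congr (congr (congrArg M.m e8) rfl) e0)).symm)).trans (((M.med_assoc (M.m x u y) w (M.m u x x) (M.m x v y))).symm)).trans (((congr (congr (congrArg M.m e6) e7) rfl)).symm)).trans ((((congr (congr (congrArg M.m rfl) rfl) e0)).symm).symm)).trans ((((M.swap23 w x (M.m v x y))).symm).symm)).trans ((((M.swap12 w (M.m v x y) x)).symm).symm)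
  have e18 : (M.m x v y) = (M.m (M.m v x y) y x) := ((((((M.swap12 x v y)).symm).symm).trans (((M.G x e3)).symm)).trans ((((M.swap12 x (M.m v x y) y)).symm).symm)).trans ((((M.swap23 (M.m v x y) x y)).symm).symm)
  have e19 : w = (M.m x w y) := ((((((((((((((hw).symm).trans ((((congr (congr (congrArg M.m e16) rfl) e0)).symm).symm)).trans (((congr (congr (congrArg M.m e8) rfl) e0)).symm)).trans (((M.med_assoc (M.m x u y) w (M.m u x x) (M.m x v y))).symm)).trans (((congr (congr (congrArg M.m e6) e7) rfl)).symm)).trans ((((M.swap23 w x (M.m x v y))).symm).symm)).trans ((((M.swap12 w (M.m x v y) x)).symm).symm)).trans ((((congr (congr (congrArg M.m e18) rfl) rfl)).symm).symm)).trans ((((M.med_assoc (M.m v x y) y w x)).symm).symm)).trans (((congr (congr (congrArg M.m e17) rfl) rfl)).symm)).trans (((M.swap12 y w x)).symm)).trans (((M.swap23 y x w)).symm)).trans (((M.swap12 x y w)).symm)).trans ((((M.swap23 x y w)).symm).symm)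
  have e20 : w = (M.m (M.m x u y) w (M.m v x y)) := ((((((hw).symm).trans ((((M.swap12 (M.m x u y) w (M.m x v y))).symm).symm)).trans ((((M.swap23 w (M.m x u y) (M.m x v y))).symm).symm)).trans ((((congr (congr (congrArg M.m rfl) e0) rfl)).symm).symm)).trans ((((M.swap23 w (M.m v x y) (M.m x u y))).symm).symm)).trans ((((M.swap12 w (M.m x u y) (M.m v x y))).symm).symm)
  have e21 : (M.m x v y) = (M.m (M.m x u y) y (M.m v x y)) := (((((((((((((((((((((((M.swap12 x v y)).symm).symm).trans ((((congr (congr (congrArg M.m e13) rfl) rfl)).symm).symm)).trans ((((M.med_assoc v u x y)).symm).symm)).trans ((((M.swap23 (M.m v x y) u y)).symm).symm)).trans ((((M.swap12 (M.m v x y) y u)).symm).symm)).trans (((M.swap23 y u (M.m v x y))).symm)).trans (((congr (congr (congrArg M.m rfl) rfl) e0)).symm)).trans (((M.swap12 u y (M.m x v y))).symm)).trans ((((M.swap23 u y (M.m x v y))).symm).symm)).trans ((((M.swap12 u (M.m x v y) y)).symm).symm)).trans ((((congr (congr (congrArg M.m e9) rfl) e2)).symm).symm)).trans (((M.med_assoc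 (M.m u x x) u v (M.m u y y))).symm)).trans (((congr (congr (congrArg M.m e10) rfl) e2)).symm)).trans ((((congr (congr (congrArg M.m e12) rfl) e2)).symm).symm)).trans (((M.med_assoc (M.m u x x) v (M.m x u y) (M.m u y y))).symm)).trans (((congr (congr (congrArg M.m e9) rfl) e2)).symm)).trans ((((congr (congr (congrArg M.m e0) rfl) rfl)).symm).symm)).trans ((((M.swap23 (M.m v x y) (M.m x u y) y)).symm).symm)).trans (((M.swap12 y (M.m v x y) (M.m x u y))).symm)).trans (((M.swap23 y (M.m x u y) (M.m v x y))).symm)).trans ((((M.swap12 y (M.m x u y) (M.m v x y))).symm).symm)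
  have e22 : (M.m x v y) = (M.m v y w) := ((((((((((((M.absorb w (M.m x v y))).symm).trans ((((M.swap12 w (M.m x v y) (M.m x v y))).symm).symm)).trans ((((congr (congr (congrArg M.m e21) rfl) e0)).symm).symm)).trans (((M.med_assoc (M.m x u y) w y (M.m v x y))).symm)).trans (((congr (congr (congrArg M.m e20) rfl) e0)).symm)).trans ((((M.swap23 w y (M.m x v y))).symm).symm)).trans ((((M.swap12 w (M.m x v y) y)).symm).symm)).trans ((((M.med_assoc x v w y)).symm).symm)).trans (((congr (congr (congrArg M.m e19) rfl) rfl)).symm)).trans (((M.swap12 v w y)).symm)).trans (((M.swap23 v y w)).symm)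
  have e23 : (M.m u w v) = (M.m v u w) := ((((M.swap23 u w v)).symm).symm).trans ((((M.swap12 u v w)).symm).symm)
  have e24 : u = (M.m u u v) := ((((M.absorb v u)).symm).trans (((M.swap12 u v u)).symm)).trans (((M.swap23 u u v)).symm)
  have e25 : (M.m u z v) = (M.m u (M.m u z v) v) := (((((congr (congr (congrArg M.m e24) rfl) rfl)).symm).symm).trans (((M.med_assoc u z u v)).symm)).trans (((M.swap12 u (M.m u z v) v)).symm)
  have e26 : (M.m u z v) = (M.m u (M.m u z v) (M.m u w v)) := (hzw).symm
  have e27 : (M.m u w v) = (M.m u v (M.m u w v)) := ((((((congr (congr (congrArg M.m e24) rfl) rfl)).symm).symm).trans (((M.med_assoc u w u v)).symm)).trans (((M.swap12 u (M.m u w v) v)).symm)).trans (((M.swap23 u v (M.m u w v))).symm)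
  have e28 : (M.m u w v) = (M.m v (M.m u z v) w) := ((((((((((((((M.absorb (M.m u z v) (M.m u w v))).symm).trans ((((M.swap12 (M.m u z v) (M.m u w v) (M.m u w v))).symm).symm)).trans ((((congr (congr (congrArg M.m e27) rfl) rfl)).symm).symm)).trans (((M.med_assoc u (M.m u z v) v (M.m u w v))).symm)).trans (((congr (congr (congrArg M.m e26) rfl) rfl)).symm)).trans ((((M.swap23 (M.m u z v) v (M.m u w v))).symm).symm)).trans ((((M.swap12 (M.m u z v) (M.m u w v) v)).symm).symm)).trans ((((M.med_assoc u w (M.m u z v) v)).symm).symm)).trans (((congr (congr (congrArg M.m e25) rfl) rfl)).symm)).trans (((M.swap12 w (M.m u z v) v)).symm)).trans (((M.swap23 w v (M.m u z v))).symm)).trans (((M.swap12 v w (M.m u z v))).symm)).trans ((((M.swap23 v w (M.m u z v))).symm).symm)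
  have e29 : (M.m (M.m x u y) (M.m u z v) (M.m x v y)) = (M.m (M.m u z v) (M.m x v y) (M.m x u y)) := (((((M.swap23 (M.m x u y) (M.m x v y) (M.m u z v))).symm).trans ((M.swap12 (M.m x u y) (M.m x v y) (M.m u z v)))).trans ((M.swap23 (M.m x v y) (M.m x u y) (M.m u z v)))).trans ((((M.swap12 (M.m x v y) (M.m u z v) (M.m x u y))).symm).symm)
  have e30 : (M.m u z v) = (M.m (M.m u z v) (M.m u z v) x) := (((((M.absorb (M.m u x x) (M.m u z v))).symm).trans (((congr (congr (congrArg M.m e7) rfl) rfl)).symm)).trans ((((M.swap12 x (M.m u z v) (M.m u z v))).symm).symm)).trans ((((M.swap23 (M.m u z v) x (M.m u z v))).symm).symm)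
  have e31 : u = (M.m u (M.m u x x) v) := ((hu).symm).trans ((((congr (congr (congrArg M.m rfl) e7) rfl)).symm).symm)
  have e32 : (M.m (M.m u z v) (M.m u z v) x) = (M.m v (M.m u z v) x) := ((((((((((((M.swap23 (M.m u z v) x (M.m u z v))).symm).trans (((M.swap12 x (M.m u z v) (M.m u z v))).symm)).trans ((congr (congr (congrArg M.m e7) rfl) rfl))).trans ((M.absorb (M.m u x x) (M.m u z v)))).trans ((((congr (congr (congrArg M.m e31) rfl) rfl)).symm).symm)).trans ((((M.med_assoc u (M.m u x x) z v)).symm).symm)).trans (((congr (congr (congrArg M.m rfl) e7) rfl)).symm)).trans (((M.swap12 x (M.m u z v) v)).symm)).trans (((M.swap23 x v (M.m u z v))).symm)).trans (((M.swap12 v x (M.m u z v))).symm)).trans ((((M.swap23 v x (M.m u z v))).symm).symm)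
  have e33 : (M.m x v y) = (M.m v y x) := ((((M.swap12 x v y)).symm).symm).trans ((((M.swap23 v x y)).symm).symm)
  have e34 : (M.m u z v) = (M.m (M.m u z v) z u) := (((M.G z (e24).symm)).symm).trans ((((M.swap12 z (M.m u z v) u)).symm).symm)
  have e35 : (M.m (M.m u z v) z u) = (M.m z (M.m u z v) u) := ((M.swap12 z (M.m u z v) u)).symm
  have e36 : z = (M.m (M.m x u y) z (M.m x v y)) := (hz).symm
  have e37 : (M.m z (M.m v x y) u) = z := ((((((((((((((M.swap12 (M.m v x y) z u)).symm).trans ((M.swap23 (M.m v x y) z u))).trans (((M.swap12 u (M.m v x y) z)).symm)).trans (((M.swap23 u z (M.m v x y))).symm)).trans (((congr (congr (congrArg M.m rfl) rfl) e0)).symm)).trans ((M.swap12 u z (M.m x v y)))).trans ((congr (congr (congrArg M.m e36) rfl) rfl))).trans ((M.med_assoc (M.m x u y) z u (M.m x v y)))).trans ((congr (congr (congrArg M.m rfl) rfl) e0))).trans ((M.swap23 (M.m (M.m x u y) u (M.m x v y)) z (M.m v x y)))).trans (((congr (congr (congrArg M.m e5) e0) rfl)).symm)).trans (((M.swap23 (M.m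 x u y) z (M.m x v y))).symm)).trans (hz)
  have e38 : (M.m (M.m u z v) u u) = u := (M.absorb (M.m u z v) u)
  have e39 : (M.m u z v) = (M.m u (M.m u z v) (M.m x v y)) := ((((((((((((M.G z (e24).symm)).symm).trans ((((M.swap12 z (M.m u z v) u)).symm).symm)).trans (((M.G z e38)).symm)).trans (((congr (congr (congrArg M.m e37) e34) rfl)).symm)).trans (((M.med_assoc z (M.m u z v) (M.m v x y) u)).symm)).trans (((congr (congr (congrArg M.m e35) rfl) rfl)).symm)).trans (((congr (congr (congrArg M.m e34) e0) rfl)).symm)).trans (((M.swap12 (M.m x v y) (M.m u z v) u)).symm)).trans (((M.swap23 (M.m x v y) u (M.m u z v))).symm)).trans (((M.swap12 u (M.m x v y) (M.m u z v))).symm)).trans ((((M.swap23 u (M.m x v y) (M.m u z v))).symm).symm)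
  have e40 : u = (M.m v u x) := (((hu).symm).trans ((((M.swap23 u x v)).symm).symm)).trans ((((M.swap12 u v x)).symm).symm)
  have e41 : (M.m x u y) = (M.m u x (M.m x v y)) := (((((((((M.swap12 x u y)).symm).symm).trans ((((M.swap23 u x y)).symm).symm)).trans ((((congr (congr (congrArg M.m e40) rfl) rfl)).symm).symm)).trans ((((M.med_assoc v u y x)).symm).symm)).trans (((congr (congr (congrArg M.m e33) rfl) rfl)).symm)).trans (((M.swap12 u (M.m x v y) x)).symm)).trans (((M.swap23 u x (M.m x v y))).symm)
  have e42 : (M.m (M.m u z v) (M.m x v y) (M.m x u y)) = (M.m x y (M.m u z v)) := (((((((((((((((((((M.swap12 (M.m x v y) (M.m u z v) (M.m x u y))).symm).trans (((M.swap23 (M.m x v y) (M.m x u y) (M.m u z v))).symm)).trans (((M.swap12 (M.m x u y) (M.m x v y) (M.m u z v))).symm)).trans ((((M.swap23 (M.m x u y) (M.m x v y) (M.m u z v))).symm).symm)).trans ((((congr (congr (congrArg M.m e41) rfl) rfl)).symm).symm)).trans (((M.med_assoc u (M.m u z v) x (M.m x v y))).symm)).trans (((congr (congr (congrArg M.m e39)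 rfl) rfl)).symm)).trans (((M.swap12 x (M.m u z v) (M.m x v y))).symm)).trans (((M.swap23 x (M.m x v y) (M.m u z v))).symm)).trans ((((M.swap12 x (M.m x v y) (M.m u z v))).symm).symm)).trans ((((M.swap23 (M.m x v y) x (M.m u z v))).symm).symm)).trans ((((congr (congr (congrArg M.m e33) rfl) rfl)).symm).symm)).trans (((M.med_assoc v (M.m u z v) y x)).symm)).trans (((congr (congr (congrArg M.m e32) rfl) rfl)).symm)).trans (((congr (congr (congrArg M.m e30) rfl) rfl)).symm)).trans (((M.swap12 y (M.m u z v) x)).symm)).trans (((M.swap23 y x (M.m u z v))).symm)).trans (((M.swap12 x y (M.m u z v))).symm)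
  have e43 : (M.m w (M.m x v y) (M.m x v y)) = (M.m x v y) := (M.absorb w (M.m x v y))
  have e44 : (M.m x v y) = (M.m (M.m v x y) (M.m v x y) (M.m x u y)) := ((((((M.swap12 x v y)).symm).symm).trans (((M.absorb (M.m x u y) (M.m v x y))).symm)).trans (((M.swap12 (M.m v x y) (M.m x u y) (M.m v x y))).symm)).trans ((((M.swap23 (M.m v x y) (M.m x u y) (M.m v x y))).symm).symm)
  have e45 : (M.m (M.m v x y) (M.m u z v) (M.m x u y)) = (M.m (M.m x u y) (M.m u z v) (M.m v x y)) := ((((M.swap12 (M.m u z v) (M.m v x y) (M.m x u y))).symm).trans ((M.swap23 (M.m u z v) (M.m v x y) (M.m x u y)))).trans (((M.swap12 (M.m x u y) (M.m u z v) (M.m v x y))).symm)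
  have e46 : (M.m (M.m x u y) (M.m u z v) (M.m v x y)) = (M.m x y (M.m u z v)) := ((((((((((((((((congr (congr (congrArg M.m rfl) rfl) e0)).symm).trans ((((congr (congr (congrArg M.m e41) rfl) rfl)).symm).symm)).trans (((M.med_assoc u (M.m u z v) x (M.m x v y))).symm)).trans (((congr (congr (congrArg M.m e39) rfl) rfl)).symm)).trans (((M.swap12 x (M.m u z v) (M.m x v y))).symm)).trans (((M.swap23 x (M.m x v y) (M.m u z v))).symm)).trans ((((M.swap12 x (M.m x v y) (M.m u z v))).symm).symm)).trans ((((M.swap23 (M.m x v y) x (M.m u z v))).symm).symm)).trans ((((congr (congr (congrArg M.m e33) rfl) rfl)).symm).symm)).trans (((M.med_assoc v (M.m u z v) y x)).symm)).trans (((congr (congr (congrArg M.m e32) rfl) rfl)).symm)).trans (((congr (congr (congrArg M.m e30) rfl) rfl)).symm)).trans (((M.swap12 y (M.m u z v) x)).symm)).trans (((M.swap23 y x (M.m u z v))).symm)).trans (((M.swap12 x y (M.m u z v))).symm)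
  have e47 : (M.m z z (M.m x u y)) = (M.m (M.m v x y) z (M.m x u y)) := ((((((((M.swap23 z z (M.m x u y))).trans ((M.swap12 z (M.m x u y) z))).trans ((M.absorb (M.m x u y) z))).trans ((hz).symm)).trans ((((M.swap23 (M.m x u y) z (M.m x v y))).symm).symm)).trans ((((congr (congr (congrArg M.m rfl) e0) rfl)).symm).symm)).trans ((((M.swap12 (M.m x u y) (M.m v x y) z)).symm).symm)).trans ((((M.swap23 (M.m v x y) (M.m x u y) z)).symm).symm)
  have e48 : z = (M.m z z (M.m x u y)) := ((((M.absorb (M.m x u y) z)).symm).trans (((M.swap12 z (M.m x u y) z)).symm)).trans (((M.swap23 z z (M.m x u y))).symm)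
  have e49 : (M.m u z v) = (M.m u v z) := (((M.swap23 u z v)).symm).symm
  have e50 : (M.m x u y) = (M.m (M.m v x y) u (M.m x u y)) := ((((M.G u e4)).symm).trans (((M.swap23 u (M.m v x y) (M.m x u y))).symm)).trans ((((M.swap12 u (M.m v x y) (M.m x u y))).symm).symm)
  have e51 : (M.m x u y) = (M.m u (M.m x u y) z) := (((((((((M.absorb z (M.m x u y))).symm).trans ((M.swap12 z (M.m x u y) (M.m x u y)))).trans ((((congr (congr (congrArg M.m e50) rfl) rfl)).symm).symm)).trans (((M.med_assoc (M.m v x y) z u (M.m x u y))).symm)).trans (((congr (congr (congrArg M.m e47) rfl) rfl)).symm)).trans (((congr (congr (congrArg M.m e48) rfl) rfl)).symm)).trans (((M.swap12 u z (M.m x u y))).symm)).trans ((((M.swap23 u z (M.m x u y))).symm).symm)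
  have e52 : (M.m x (M.m x u y) y) = (M.m x u y) := ((((M.swap12 x (M.m x u y) y)).trans ((congr (congr (congrArg M.m e10) e7) e2))).trans ((M.med_assoc (M.m u x x) u (M.m u x x) (M.m u y y)))).trans (((congr (congr (congrArg M.m e11) rfl) e2)).symm)
  have e53 : (M.m (M.m v x y) (M.m v x y) (M.m x u y)) = (M.m (M.m v x y) v (M.m x u y)) := ((((((((((((M.swap23 (M.m v x y) (M.m x u y) (M.m v x y))).symm).trans ((M.swap12 (M.m v x y) (M.m x u y) (M.m v x y)))).trans ((M.absorb (M.m x u y) (M.m v x y)))).trans (((M.swap12 x v y)).symm)).trans (((M.G v e52)).symm)).trans (((M.swap23 v (M.m x u y) (M.m x v y))).symm)).trans ((((M.swap12 v (M.m x u y) (M.m x v y))).symm).symm)).trans ((((M.swap23 (M.m x u y) v (M.m x v y))).symm).symm)).trans ((((M.swap12 (M.m x u y) (M.m x v y) v)).symm).symm)).trans ((((congr (congr (congrArg M.m e0) rfl) rfl)).symm).symm)).trans ((((M.swap23 (M.m v x y) (M.m x u y) v)).symm).symm)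
  have e54 : (M.m z z (M.m x u y)) = (M.m z (M.m v x y) (M.m x u y)) := (((((((((M.swap23 z z (M.m x u y))).trans ((M.swap12 z (M.m x u y) z))).trans ((M.absorb (M.m x u y) z))).trans ((hz).symm)).trans ((((M.swap23 (M.m x u y) z (M.m x v y))).symm).symm)).trans ((((congr (congr (congrArg M.m rfl) e0) rfl)).symm).symm)).trans ((((M.swap12 (M.m x u y) (M.m v x y) z)).symm).symm)).trans ((((M.swap23 (M.m v x y) (M.m x u y) z)).symm).symm)).trans (((M.swap12 z (M.m v x y) (M.m x u y))).symm)
  have e55 : (M.m z (M.m x u y) (M.m x u y)) = (M.m x u y) := (((M.absorb z (M.m x u y))).symm).symm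
  have e56 : (M.m (M.m x y (M.m u z v)) z (M.m x u y)) = z := (((((((((((((((((((((((((((((((M.swap23 (M.m x y (M.m u z v)) (M.m x u y) z)).symm).trans (((congr (congr (congrArg M.m e46) rfl) rfl)).symm)).trans (((M.swap23 (M.m (M.m x u y) (M.m u z v) (M.m v x y)) z (M.m x u y))).symm)).trans (((congr (congr (congrArg M.m e45) rfl) rfl)).symm)).trans (((M.med_assoc (M.m v x y) z (M.m u z v) (M.m x u y))).symm)).trans (((congr (congr (congrArg M.m e47) rfl) rfl)).symm)).trans (((congr (congr (congrArg M.m e48) rfl) rfl)).symm)).trans (((M.swap23 z (M.m x u y) (M.m u z v))).symm)).trans ((M.swap12 z (M.m x u y) (M.m u z v)))).trans ((M.swap23 (M.m x u y) z (M.m u z v)))).trans ((M.swap12 (M.m x u y) (M.m u z v) z))).trans ((congr (congr (congrArg M.m e49) rfl) rfl))).trans ((M.med_assoc u v (M.m x u y) z))).trans (((congr (congr (congrArg M.m e51) rfl) rfl)).symm)).trans (((M.swap12 v (M.m x u y) z)).symm)).trans (((M.swap23 v z (M.m x u y))).symm)).trans ((M.swap12 v z (M.m x u y)))).trans ((congr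 (congr (congrArg M.m e48) rfl) rfl))).trans ((congr (congr (congrArg M.m e47) rfl) rfl))).trans ((M.med_assoc (M.m v x y) z v (M.m x u y)))).trans (((congr (congr (congrArg M.m e53) rfl) rfl)).symm)).trans (((M.med_assoc (M.m v x y) z (M.m v x y) (M.m x u y))).symm)).trans (((congr (congr (congrArg M.m e47) rfl) rfl)).symm)).trans (((M.med_assoc z (M.m v x y) z (M.m x u y))).symm)).trans (((congr (congr (congrArg M.m e54) rfl) rfl)).symm)).trans ((congr (congr (congrArg M.m (e48).symm) e48) rfl))).trans ((M.G z e55))).trans ((M.swap23 z z (M.m x u y)))).trans ((M.swap12 z (M.m x u y) z))).trans ((M.absorb (M.m x u y) z))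
  have e57 : (M.m (M.m x u y) (M.m u z v) (M.m v x y)) = (M.m (M.m x y (M.m u z v)) (M.m x v y) (M.m x u y)) := (((((((((((((congr (congr (congrArg M.m rfl) rfl) e0)).symm).trans (((M.swap23 (M.m x u y) (M.m x v y) (M.m u z v))).symm)).trans ((M.swap12 (M.m x u y) (M.m x v y) (M.m u z v)))).trans ((M.swap23 (M.m x v y) (M.m x u y) (M.m u z v)))).trans ((congr (congr (congrArg M.m e44) rfl) rfl))).trans ((M.med_assoc (M.m v x y) (M.m v x y) (M.m u z v) (M.m x u y)))).trans ((congr (congr (congrArg M.m e45) (e0).symm) rfl))).trans ((M.swap23 (M.m (M.m x u y) (M.m u z v) (M.m v x y)) (M.m x v y) (M.m x u y)))).trans ((M.swap12 (M.m (M.m x u y) (M.m u z v) (M.m v x y)) (M.m x u y) (M.m x v y)))).trans ((congr (congr (congrArg M.m rfl) e46) rfl))).trans ((M.swap12 (M.m x u y) (M.m x y (M.m u z v)) (M.m x v y)))).trans (((M.swap23 (M.m x y (M.m u z v)) (M.m x v y) (M.m x u y))).symm)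
  have e58 : (M.m (M.m x u y) (M.m u z v) (M.m x v y)) = (M.m (M.m x u y) (M.m u z v) (M.m v x y)) := (((congr (congr (congrArg M.m rfl) rfl) e0)).symm).symm
  have e59 : (M.m (M.m v x y) (M.m v x y) (M.m x u y)) = (M.m (M.m v x y) y (M.m x u y)) := (((((((((((((((((((((M.swap23 (M.m v x y) (M.m x u y) (M.m v x y))).symm).trans ((M.swap12 (M.m v x y) (M.m x u y) (M.m v x y)))).trans ((M.absorb (M.m x u y) (M.m v x y)))).trans ((((congr (congr (congrArg M.m e13) rfl) rfl)).symm).symm)).trans ((((M.med_assoc v u x y)).symm).symm)).trans ((((M.swap23 (M.m v x y) u y)).symm).symm)).trans ((((M.swap12 (M.m v x y) y u)).symm).symm)).trans (((M.swap23 y u (M.m v x y))).symm)).trans (((congr (congr (congrArg M.m rfl) rfl) e0)).symm)).trans (((M.swap12 u y (M.m x v y))).symm)).trans ((((M.swap23 u y (M.m x v y))).symm).symm)).trans ((((M.swap12 u (M.m x v y) y)).symm).symm)).trans ((((congr (congr (congrArg M.m e9) rfl) e2)).symm).symm)).trans (((M.med_assoc (M.m u x x) u v (M.m u y y))).symm)).trans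 (((congr (congr (congrArg M.m e10) rfl) e2)).symm)).trans ((((congr (congr (congrArg M.m e12) rfl) e2)).symm).symm)).trans (((M.med_assoc (M.m u x x) v (M.m x u y) (M.m u y y))).symm)).trans (((congr (congr (congrArg M.m e9) rfl) e2)).symm)).trans ((((congr (congr (congrArg M.m e0) rfl) rfl)).symm).symm)).trans ((((M.swap23 (M.m v x y) (M.m x u y) y)).symm).symm)
  have e60 : z = (M.m (M.m x u y) z y) := ((((((((((((((((M.absorb (M.m x u y) z)).symm).trans (((M.swap12 z (M.m x u y) z)).symm)).trans (((M.swap23 z z (M.m x u y))).symm)).trans (((M.G z e55)).symm)).trans (((congr (congr (congrArg M.m (e48).symm) e48) rfl)).symm)).trans ((((congr (congr (congrArg M.m e54) rfl) rfl)).symm).symm)).trans ((((M.med_assoc z (M.m v x y) z (M.m x u y))).symm).symm)).trans ((((congr (congr (congrArg M.m e47) rfl) rfl)).symm).symm)).trans ((((M.med_assoc (M.m v x y) z (M.m v x y) (M.m x u y))).symm).symm)).trans ((((congr (congr (congrArg M.m e59) rfl) rfl)).symm).symm)).trans (((M.med_assoc (M.m v x y) z y (M.m x u y))).symm)).trans (((congr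 (congr (congrArg M.m e47) rfl) rfl)).symm)).trans (((congr (congr (congrArg M.m e48) rfl) rfl)).symm)).trans ((((M.swap23 z y (M.m x u y))).symm).symm)).trans ((((M.swap12 z (M.m x u y) y)).symm).symm)
  have e61 : (M.m u x y) = (M.m (M.m x u y) x y) := (((((M.swap12 x u y)).symm).trans ((((congr (congr (congrArg M.m e11) rfl) e2)).symm).symm)).trans (((M.med_assoc (M.m u x x) u (M.m u x x) (M.m u y y))).symm)).trans (((congr (congr (congrArg M.m e10) e7) e2)).symm)
  have e62 : (M.m u z y) = (M.m z u y) := (M.swap12 u z y)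
  have e63 : (M.m x z y) = (M.m z x y) := (M.swap12 x z y)
  have e64 : z = (M.m z x y) := ((((((((((((((((((((((((M.absorb (M.m x u y) z)).symm).trans (((M.swap12 z (M.m x u y) z)).symm)).trans (((M.swap23 z z (M.m x u y))).symm)).trans (((M.G z e55)).symm)).trans (((congr (congr (congrArg M.m (e48).symm) e48) rfl)).symm)).trans ((((congr (congr (congrArg M.m e54) rfl) rfl)).symm).symm)).trans ((((M.med_assoc z (M.m v x y) z (M.m x u y))).symm).symm)).trans ((((congr (congr (congrArg M.m e47) rfl) rfl)).symm).symm)).trans ((((M.med_assoc (M.m v x y) z (M.m v x y) (M.m x u y))).symm).symm)).trans ((((congr (congr (congrArg M.m e59) rfl) rfl)).symm).symm)).trans (((M.med_assoc (M.m v x y) z y (M.m x u y))).symm)).trans (((congr (congr (congrArg M.m e47) rfl) rfl)).symm)).trans (((congr (congr (congrArg M.m e48) rfl) rfl)).symm)).trans ((((M.swap23 z y (M.m x u y))).symm).symm)).trans ((((M.swap12 z (M.m x u y) y)).symm).symm)).trans ((((M.med_assoc x u z y)).symm).symm)).trans ((((congr (congr (congrArg M.m e63) rfl) rfl)).symm).symm)).trans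 ((((M.med_assoc z x u y)).symm).symm)).trans (((congr (congr (congrArg M.m e62) rfl) rfl)).symm)).trans (((M.med_assoc u x z y)).symm)).trans ((((congr (congr (congrArg M.m e61) rfl) rfl)).symm).symm)).trans ((((M.med_assoc (M.m x u y) x z y)).symm).symm)).trans (((congr (congr (congrArg M.m e60) rfl) rfl)).symm)
  have e65 : z = (M.m (M.m x u y) z (M.m v x y)) := ((((hz).symm).trans ((((M.swap23 (M.m x u y) z (M.m x v y))).symm).symm)).trans ((((congr (congr (congrArg M.m rfl) e0) rfl)).symm).symm)).trans ((((M.swap23 (M.m x u y) (M.m v x y) z)).symm).symm)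
  have e66 : (M.m x v y) = (M.m v y z) := (((((((((((((M.absorb z (M.m x v y))).symm).trans ((((M.swap12 z (M.m x v y) (M.m x v y))).symm).symm)).trans ((((congr (congr (congrArg M.m e21) rfl) e0)).symm).symm)).trans (((M.med_assoc (M.m x u y) z y (M.m v x y))).symm)).trans (((congr (congr (congrArg M.m e65) rfl) e0)).symm)).trans ((((M.swap23 z y (M.m x v y))).symm).symm)).trans ((((M.swap12 z (M.m x v y) y)).symm).symm)).trans (((M.med_assoc x z v y)).symm)).trans (((congr (congr (congrArg M.m (e63).symm) rfl) rfl)).symm)).trans (((congr (congr (congrArg M.m e64) rfl) rfl)).symm)).trans (((M.swap12 v z y)).symm)).trans (((M.swap23 v y z)).symm)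
  have e67 : (M.m u v v) = v := (M.absorb u v)
  have e68 : (M.m u v z) = (M.m v (M.m u z v) z) := ((((((M.swap23 u z v)).symm).trans (((M.G z e67)).symm)).trans (((M.swap23 z v (M.m u z v))).symm)).trans (((M.swap12 v z (M.m u z v))).symm)).trans ((((M.swap23 v z (M.m u z v))).symm).symm)
  have e69 : (M.m u x y) = (M.m (M.m x u y) u y) := (((((((((M.swap12 x u y)).symm).trans (((M.absorb (M.m u y y) (M.m x u y))).symm)).trans (((congr (congr (congrArg M.m e2) rfl) rfl)).symm)).trans ((((M.swap12 y (M.m x u y) (M.m x u y))).symm).symm)).trans ((((M.swap23 (M.m x u y) y (M.m x u y))).symm).symm)).trans ((((congr (congr (congrArg M.m e10) rfl) e2)).symm).symm)).trans ((((M.med_assoc (M.m u x x) u (M.m x u y) (M.m u y y))).symm).symm)).trans (((congr (congr (congrArg M.m e12) rfl) e2)).symm)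
  have e70 : z = (M.m u y z) := ((((((((((((((((((((((((((M.absorb (M.m x u y) z)).symm).trans (((M.swap12 z (M.m x u y) z)).symm)).trans (((M.swap23 z z (M.m x u y))).symm)).trans (((M.G z e55)).symm)).trans (((congr (congr (congrArg M.m (e48).symm) e48) rfl)).symm)).trans ((((congr (congr (congrArg M.m e54) rfl) rfl)).symm).symm)).trans ((((M.med_assoc z (M.m v x y) z (M.m x u y))).symm).symm)).trans ((((congr (congr (congrArg M.m e47) rfl) rfl)).symm).symm)).trans ((((M.med_assoc (M.m v x y) z (M.m v x y) (M.m x u y))).symm).symm)).trans ((((congr (congr (congrArg M.m e59) rfl) rfl)).symm).symm)).trans (((M.med_assoc (M.m v x y) z y (M.m x u y))).symm)).trans (((congr (congr (congrArg M.m e47) rfl) rfl)).symm)).trans (((congr (congr (congrArg M.m e48) rfl) rfl)).symm)).trans ((((M.swap23 z y (M.m x u y))).symm).symm)).trans ((((M.swap12 z (M.m x u y) y)).symm).symm)).trans ((((M.med_assoc x u z y)).symm).symm)).trans ((((congr (congr (congrArg M.m e63) rfl) rfl)).symm).symm)).trans ((((M.med_assoc z x u y)).symm).symm)).trans (((congr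 (congr (congrArg M.m e62) rfl) rfl)).symm)).trans (((M.med_assoc u x z y)).symm)).trans ((((congr (congr (congrArg M.m e69) rfl) rfl)).symm).symm)).trans ((((M.med_assoc (M.m x u y) u z y)).symm).symm)).trans (((congr (congr (congrArg M.m e60) rfl) rfl)).symm)).trans (((M.swap12 u z y)).symm)).trans (((M.swap23 u y z)).symm)
  have e71 : z = (M.m x y (M.m u z v)) := (((((((((((((((((((((((((((((((((((((((((((M.absorb v z)).symm).trans ((((M.swap12 v z z)).symm).symm)).trans ((((congr (congr (congrArg M.m e70) rfl) rfl)).symm).symm)).trans (((M.med_assoc u v y z)).symm)).trans ((((congr (congr (congrArg M.m e68) rfl) rfl)).symm).symm)).trans ((((M.med_assoc v (M.m u z v) y z)).symm).symm)).trans (((congr (congr (congrArg M.m e66) rfl) rfl)).symm)).trans (((M.swap23 (M.m x v y) z (M.m u z v))).symm)).trans (((M.swap12 z (M.m x v y) (M.m u z v))).symm)).trans ((((M.swap23 z (M.m x v y) (M.m u z v))).symm).symm)).trans ((((congr (congr (congrArg M.m e36) rfl) rfl)).symm).symm)).trans ((((M.med_assoc (M.m x u y) z (M.m u z v) (M.m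 x v y))).symm).symm)).trans ((((congr (congr (congrArg M.m e58) rfl) rfl)).symm).symm)).trans ((((M.swap23 (M.m (M.m x u y) (M.m u z v) (M.m v x y)) z (M.m x v y))).symm).symm)).trans ((((M.swap12 (M.m (M.m x u y) (M.m u z v) (M.m v x y)) (M.m x v y) z)).symm).symm)).trans ((((congr (congr (congrArg M.m rfl) e57) rfl)).symm).symm)).trans ((((M.G (M.m x v y) e56)).symm).symm)).trans ((((M.swap23 (M.m x y (M.m u z v)) (M.m x v y) (M.m x u y))).symm).symm)).trans (((M.swap12 (M.m x u y) (M.m x y (M.m u z v)) (M.m x v y))).symm)).trans (((congr (congr (congrArg M.m rfl) e46) rfl)).symm)).trans (((M.swap12 (M.m (M.m x u y) (M.m u z v) (M.m v x y)) (M.m x u y) (M.m x v y))).symm)).trans (((M.swap23 (M.m (M.m x u y) (M.m u z v) (M.m v x y)) (M.m x v y) (M.m x u y))).symm)).trans (((congr (congr (congrArg M.m e45) (e0).symm) rfl)).symm)).trans (((M.med_assoc (M.m v x y) (M.m v x y) (M.m u z v) (M.m x u y))).symm)).trans (((congr (congr (congrArg M.m e44) rfl) rfl)).symm)).trans (((M.swap23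 (M.m x v y) (M.m x u y) (M.m u z v))).symm)).trans (((M.swap12 (M.m x u y) (M.m x v y) (M.m u z v))).symm)).trans ((((M.swap23 (M.m x u y) (M.m x v y) (M.m u z v))).symm).symm)).trans ((((congr (congr (congrArg M.m e41) rfl) rfl)).symm).symm)).trans (((M.med_assoc u (M.m u z v) x (M.m x v y))).symm)).trans (((congr (congr (congrArg M.m e39) rfl) rfl)).symm)).trans (((M.swap12 x (M.m u z v) (M.m x v y))).symm)).trans (((M.swap23 x (M.m x v y) (M.m u z v))).symm)).trans ((((M.swap12 x (M.m x v y) (M.m u z v))).symm).symm)).trans ((((M.swap23 (M.m x v y) x (M.m u z v))).symm).symm)).trans ((((congr (congr (congrArg M.m e33) rfl) rfl)).symm).symm)).trans (((M.med_assoc v (M.m u z v) y x)).symm)).trans (((congr (congr (congrArg M.m e32) rfl) rfl)).symm)).trans (((congr (congr (congrArg M.m e30) rfl) rfl)).symm)).trans (((M.swap12 y (M.m u z v) x)).symm)).trans (((M.swap23 y x (M.m u z v))).symm)).trans (((M.swap12 x y (M.m u z v))).symm)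
  have e72 : w = (M.m w (M.m x y (M.m u z v)) (M.m x v y)) := ((((((((((((((((((((((((hw).symm).trans ((M.swap23 (M.m x u y) w (M.m x v y)))).trans ((congr (congr (congrArg M.m e5) e0) rfl))).trans (((M.swap23 (M.m (M.m x u y) u (M.m x v y)) w (M.m v x y))).symm)).trans (((congr (congr (congrArg M.m rfl) rfl) e0)).symm)).trans (((M.med_assoc (M.m x u y) w u (M.m x v y))).symm)).trans (((congr (congr (congrArg M.m e6) rfl) rfl)).symm)).trans (((M.swap12 u w (M.m x v y))).symm)).trans ((M.swap23 u w (M.m x v y)))).trans ((M.swap12 u (M.m x v y) w))).trans ((congr (congr (congrArg M.m e22) rfl) rfl))).trans (((M.med_assoc v u y w)).symm)).trans (((congr (congr (congrArg M.m e23) rfl) rfl)).symm)).trans ((congr (congr (congrArg M.m e28) rfl) rfl))).trans ((M.med_assoc v (M.m u z v) y w))).trans (((congr (congr (congrArg M.m e22) rfl) rfl)).symm)).trans (((M.swap23 (M.m x v y) w (M.m u z v))).symm)).trans (((M.swap12 w (M.m x v y) (M.m u z v))).symm)).trans ((M.swap23 w (M.m x v y) (M.m u z v)))).trans ((congr (congr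 (congrArg M.m e6) rfl) rfl))).trans ((M.med_assoc (M.m x u y) w (M.m u z v) (M.m x v y)))).trans ((congr (congr (congrArg M.m e29) rfl) e0))).trans ((M.swap12 (M.m (M.m u z v) (M.m x v y) (M.m x u y)) w (M.m v x y)))).trans ((congr (congr (congrArg M.m rfl) e42) (e0).symm))
  have e73 : w = (M.m (M.m v x y) w z) := ((((((((((((((((((((((((((((((hw).symm).trans ((M.swap23 (M.m x u y) w (M.m x v y)))).trans ((congr (congr (congrArg M.m e5) e0) rfl))).trans (((M.swap23 (M.m (M.m x u y) u (M.m x v y)) w (M.m v x y))).symm)).trans (((congr (congr (congrArg M.m rfl) rfl) e0)).symm)).trans (((M.med_assoc (M.m x u y) w u (M.m x v y))).symm)).trans (((congr (congr (congrArg M.m e6) rfl) rfl)).symm)).trans (((M.swap12 u w (M.m x v y))).symm)).trans ((M.swap23 u w (M.m x v y)))).trans ((M.swap12 u (M.m x v y) w))).trans ((congr (congr (congrArg M.m e22) rfl) rfl))).trans (((M.med_assoc v u y w)).symm)).trans (((congr (congr (congrArg M.m e23) rfl) rfl)).symm)).trans ((congr (congr (congrArg M.m e28) rfl) rfl))).trans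 ((M.med_assoc v (M.m u z v) y w))).trans (((congr (congr (congrArg M.m e22) rfl) rfl)).symm)).trans (((M.swap23 (M.m x v y) w (M.m u z v))).symm)).trans (((M.swap12 w (M.m x v y) (M.m u z v))).symm)).trans ((M.swap23 w (M.m x v y) (M.m u z v)))).trans ((congr (congr (congrArg M.m e6) rfl) rfl))).trans ((M.med_assoc (M.m x u y) w (M.m u z v) (M.m x v y)))).trans ((congr (congr (congrArg M.m e29) rfl) e0))).trans ((M.swap12 (M.m (M.m u z v) (M.m x v y) (M.m x u y)) w (M.m v x y)))).trans ((congr (congr (congrArg M.m rfl) e42) (e0).symm))).trans (((M.G (M.m x y (M.m u z v)) e43)).symm)).trans (((congr (congr (congrArg M.m e71) e72) rfl)).symm)).trans ((M.swap12 z w (M.m x v y)))).trans ((((congr (congr (congrArg M.m rfl) rfl) e0)).symm).symm)).trans ((((M.swap23 w z (M.m v x y))).symm).symm)).trans ((((M.swap12 w (M.m v x y) z)).symm).symm)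
  have e74 : (M.m (M.m x u y) z w) = z := ((((((((((M.swap12 z (M.m x u y) w)).symm).trans (((M.swap23 z w (M.m x u y))).symm)).trans ((((M.swap12 z w (M.m x u y))).symm).symm)).trans ((((M.swap23 w z (M.m x u y))).symm).symm)).trans ((((congr (congr (congrArg M.m e73) rfl) rfl)).symm).symm)).trans (((M.med_assoc (M.m v x y) (M.m x u y) w z)).symm)).trans (((congr (congr (congrArg M.m e1) rfl) rfl)).symm)).trans ((((M.swap12 z w z)).symm).symm)).trans ((((M.absorb w z)).symm).symm)
  exact e74


lemma mem12 (a b c : X) : M.m a (M.m a b c) b = M.m a b c := by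
  have h := M.H1 a c b
  rw [M.swap23 a c b] at h
  exact h

lemma mem23 (a b c : X) : M.m b (M.m a b c) c = M.m a b c := by
  have h := M.H1 b a c
  rw [M.swap12 b a c] at h
  exact h

lemma leP_trans {p a b c : X} (h1 : M.m p a b = a) (h2 : M.m p b c = b) :
    M.m p a c = a := by
  have e : M.m p (M.m p a b) c = a := by
    rw [M.p231 p (M.m p a b) c, M.p231 p a b, M.assocP a b c p, M.p312 b c p, h2,
      M.p312 a b p, h1]
  calc M.m p a c = M.m p (M.m p a b) c := by rw [h1]
    _ = a := e

lemma medChain {c z1 z2 z3 : X} (h1 : M.m c z1 z2 = z1) (h2 : M.m c z2 z3 = z2) :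
    M.m z1 z2 z3 = z2 := by
  set t := M.m z1 z2 z3 with ht
  have m12 : M.m z1 t z2 = t := by rw [ht]; exact M.mem12 z1 z2 z3
  have m23 : M.m z2 t z3 = t := by rw [ht]; exact M.mem23 z1 z2 z3
  have m13 : M.m z1 t z3 = t := by rw [ht]; exact M.H1 z1 z2 z3
  have t_cz2 : M.m c t z2 = t := M.convex h1 (M.absorb c z2) m12
  have h13 : M.m c z1 z3 = z1 := M.leP_trans h1 h2
  have t_cz3 : M.m c t z3 = t := M.convex h13 (M.absorb c z3) m13
  have key : M.m c z2 z3 = t := M.U t_cz2 m23 t_cz3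
  rw [h2] at key
  exact key.symm

lemma lemA {u v x c : X} (hcx : M.m u c x = c) (hu : M.m u x v = u) :
    M.m u c v = u := by
  have f0 : M.m u (M.m c u v) v = M.m c u v := M.mem23 c u v
  have f1 : M.m (M.m c u v) x u = M.m c u v := by
    rw [M.swap23 c u v, M.med_assoc c v x u, M.p312 c x u, hcx]
  have f2 : M.m x u (M.m c u v) = u := by
    have g := M.G x f0
    rw [hu] at g
    exact g
  have f3 : M.m x u (M.m c u v) = M.m c u v := by
    rw [M.p312 x u (M.m c u v)]
    exact f1
  rw [M.swap12 u c v]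
  exact f3.symm.trans f2

lemma lemB {u v x y : X} (hu : M.m u x v = u) (hv : M.m u y v = v) :
    M.m x (M.m x u y) (M.m x v y) = M.m x u y := by
  have gcx : M.m u (M.m x u y) x = M.m x u y := M.G u (M.maab x y)
  have gcy : M.m u (M.m x u y) y = M.m x u y := M.G u (M.absorb x y)
  have gdy : M.m v (M.m x v y) y = M.m x v y := M.G v (M.absorb x y)
  have hvy : M.m u v y = v := by rw [M.swap23 u v y]; exact hv
  have hdy : M.m u (M.m x v y) y = M.m x v y := M.convex hvy (M.absorb u y) gdy
  set W := M.m x (M.m x u y) (M.m x v y) with hW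
  have w_xc : M.m x W (M.m x u y) = W := by
    rw [hW]; exact M.mem12 x (M.m x u y) (M.m x v y)
  have w_cd : M.m (M.m x u y) W (M.m x v y) = W := by
    rw [hW]; exact M.mem23 x (M.m x u y) (M.m x v y)
  have hcu : M.m x (M.m x u y) u = M.m x u y := by
    rw [M.p321 x (M.m x u y) u]; exact gcx
  have w_xu : M.m x W u = W := M.convex (M.maab x u) hcu w_xc
  have w_uy : M.m u W y = W := M.convex gcy hdy w_cd
  have w_xy : M.m x W y = W := M.convex (M.H1 x u y) (M.H1 x v y) w_cd
  have final := M.U w_xu w_uy w_xy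
  exact final.symm

lemma chainSymm {u v : X} (h : M.IsChainInterval u v) : M.IsChainInterval v u := by
  obtain ⟨tot, med⟩ := h
  have memconv : ∀ z : X, z ∈ M.interval v u → z ∈ M.interval u v := by
    intro z hz
    show M.m u z v = z
    rw [M.p321 u z v]; exact hz
  have hv_mem : v ∈ M.interval u v := M.absorb u v
  constructor
  · intro a ha b hb
    have ha' := memconv a ha; have hb' := memconv b hb
    rcases tot a ha' b hb' with hab | hba
    · right
      have hbv : M.leI u b v := hb'
      have key := med a ha' b hb' v hv_mem hab hbv
      show M.m v b a = b
      rw [M.p321 v b a]; exact key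
    · left
      have hav : M.leI u a v := ha'
      have key := med b hb' a ha' v hv_mem hba hav
      show M.m v a b = a
      rw [M.p321 v a b]; exact key
  · intro a _ b _ c _ h1 h2
    exact M.medChain h1 h2

lemma mainA {u v x y : X} (huv : u ≠ v) (hCI : M.IsChainInterval u v)
    (hu : M.m u x v = u) (hv : M.m u y v = v) :
    ∃ c d : X, c ∈ M.interval x y ∧ d ∈ M.interval x y ∧ c ≠ d ∧
      c ∈ M.interval x d ∧ d ∈ M.interval c y ∧ M.IsChainInterval c d := by
  obtain ⟨tot, med⟩ := hCI
  have fc : M.m u (M.m x u y) v = u := by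
    have gcx : M.m u (M.m x u y) x = M.m x u y := M.G u (M.maab x y)
    exact M.lemA gcx hu
  have hvyu : M.m v y u = v := by rw [M.p321 v y u]; exact hv
  have fd : M.m u (M.m x v y) v = v := by
    have gdy : M.m v (M.m x v y) y = M.m x v y := M.G v (M.absorb x y)
    have key : M.m v (M.m x v y) u = v := M.lemA gdy hvyu
    rw [M.p321 u (M.m x v y) v]; exact key
  have hvxu : M.m v x u = u := by rw [M.p321 v x u]; exact hu
  refine ⟨M.m x u y, M.m x v y, M.H1 x u y, M.H1 x v y, ?_, ?_, ?_, ?_⟩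
  · intro hcd
    apply huv
    have e : M.m u (M.m x u y) v = M.m u (M.m x v y) v := by rw [hcd]
    exact fc.symm.trans (e.trans fd)
  · exact M.lemB hu hv
  · -- d ∈ [c, y]
    have key := M.lemB hvyu hvxu
    rw [M.p321 y v x, M.p321 y u x] at key
    show M.m (M.m x u y) (M.m x v y) y = M.m x v y
    rw [M.p321 (M.m x u y) (M.m x v y) y]
    exact key
  · constructor
    · intro z hz w hw
      have hfz : M.m u (M.m u z v) v = M.m u z v := M.H1 u z v
      have hfw : M.m u (M.m u w v) v = M.m u w v := M.H1 u w v
      rcases tot (M.m u z v) hfz (M.m u w v) hfw with hzw | hwz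
      · left; exact M.totT hu hv hz hw hzw
      · right; exact M.totT hu hv hw hz hwz
    · intro z1 _ z2 _ z3 _ l12 l23
      exact M.medChain l12 l23

end MedianAlgebra

/-- Chain-solvability is equivalent to the median T₂ property. -/
theorem chainSolvable_iff_medT2 {X : Type*} (M : MedianAlgebra X) :
    (∀ x y : X, x ≠ y → ∃ c d : X,
        c ∈ M.interval x y ∧ d ∈ M.interval x y ∧ c ≠ d ∧
        c ∈ M.interval x d ∧ d ∈ M.interval c y ∧ M.IsChainInterval c d)
    ↔
    (∀ x y : X, x ≠ y → ∃ u v : X, u ≠ v ∧ M.IsChainInterval u v ∧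
        ({M.m u x v, M.m u y v} : Set X) = {u, v}) := by
  constructor
  · intro H x y hxy
    obtain ⟨c, d, _, _, hcd, hc, hd, hCI⟩ := H x y hxy
    refine ⟨c, d, hcd, hCI, ?_⟩
    have h1 : M.m c x d = c := by rw [M.swap12 c x d]; exact hc
    have h2 : M.m c y d = d := by rw [M.swap23 c y d]; exact hd
    rw [h1, h2]
  · intro H x y hxy
    obtain ⟨u, v, huv, hCI, hset⟩ := H x y hxy
    have hx : M.m u x v = u ∨ M.m u x v = v := by
      have hm : M.m u x v ∈ ({u, v} : Set X) := by
        rw [← hset]; exact Set.mem_insert _ _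
      simpa using hm
    have hy : M.m u y v = u ∨ M.m u y v = v := by
      have hm : M.m u y v ∈ ({u, v} : Set X) := by
        rw [← hset]; exact Set.mem_insert_iff.mpr (Or.inr rfl)
      simpa using hm
    have hu' : u = M.m u x v ∨ u = M.m u y v := by
      have hm : u ∈ ({M.m u x v, M.m u y v} : Set X) := by
        rw [hset]; exact Set.mem_insert _ _
      simpa using hm
    have hv' : v = M.m u x v ∨ v = M.m u y v := by
      have hm : v ∈ ({M.m u x v, M.m u y v} : Set X) := by
        rw [hset]; exact Set.mem_insert_iff.mpr (Or.inr rfl)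
      simpa using hm
    rcases hx with h1 | h1
    · have h2 : M.m u y v = v := by
        rcases hy with h2 | h2
        · exfalso; apply huv
          rcases hv' with hv1 | hv1
          · exact (hv1.trans h1).symm
          · exact (hv1.trans h2).symm
        · exact h2
      exact M.mainA huv hCI h1 h2
    · have h2 : M.m u y v = u := by
        rcases hy with h2 | h2
        · exact h2
        · exfalso; apply huv
          rcases hu' with hu1 | hu1
          · exact hu1.trans h1
          · exact hu1.trans h2
      have hCI' := M.chainSymm hCI
      have h1' : M.m v x u = v := by rw [M.p321 v x u]; exact h1
      have h2' : M.m v y u = u := by rw [M.p321 v y u]; exact h2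
      exact M.mainA (Ne.symm huv) hCI' h1' h2'
end

section
/- Let X be a median algebra and let a,b ∈ X be adjacent (i.e., [a,b] = {a,b}) with a ≠ b. Then the wall determined by a,b, namely the partition {S^b_a, S^a_b} where S^b_a = {x : a ∈ [x,b]} and S^a_b = {x : b ∈ [x,a]}, is the unique wall of X separating a and b: the two shadows are disjoint convex sets whose union is X, with a ∈ S^b_a and b ∈ S^a_b. -/
open MedianAlgebra

section Aux

variable {X : Type*} (M : MedianAlgebra X)

lemma MA_swap13 (p q r : X) : M.m p q r = M.m r q p := by
  rw [M.swap12, M.swap23, M.swap12]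

lemma MA_dup1 (u v : X) : M.m u u v = u := by
  rw [MA_swap13, M.absorb]

lemma MA_dup2 (u v : X) : M.m u v u = u := by
  rw [M.swap23, MA_dup1]

/-- gate lemma: `m p q r ∈ [p,r]`. -/
lemma MA_gate (p q r : X) : M.m p (M.m p q r) r = M.m p q r := by
  have h := M.med_assoc p q p r
  rw [MA_dup1] at h
  rw [M.swap12]
  exact h

/-- Key quasi-identity: if `x, y` lie on the `a`-side, `z ∈ [x,y]` but `z` lies
on the `b`-side, then `a = b`. -/
lemma MA_key {a b x y z : X} (hx : M.m a x b = a) (hy : M.m a y b = a)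
    (hz : M.m x z y = z) (ht : M.m a z b = b) : a = b := by
  have hx' : M.m x a b = a := by rw [M.swap12]; exact hx
  -- e1 : m (m x y b) a b = a
  have e1 : M.m (M.m x y b) a b = a := by
    have h := M.med_assoc x a y b
    rw [hx', hy] at h
    exact h.symm
  -- e2 : m (m x y b) x b = m x y b
  have e2 : M.m (M.m x y b) x b = M.m x y b := by
    have h := M.med_assoc x y x b
    rw [MA_dup1] at h
    exact h
  -- e3 : m a x (m x y b) = m x y b
  have e3 : M.m a x (M.m x y b) = M.m x y b := by
    have h := M.med_assoc b a x (M.m x y b)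
    have hbac : M.m b a (M.m x y b) = a := by
      rw [MA_swap13]; exact e1
    have hbxc : M.m b x (M.m x y b) = M.m x y b := by
      rw [MA_swap13]; exact e2
    rw [hbac, hbxc, MA_dup2] at h
    exact h
  -- e4 : m x z b = m (m x y b) z x
  have e4 : M.m x z b = M.m (M.m x y b) z x := by
    have h := M.med_assoc y z b x
    have hyzx : M.m y z x = z := by rw [MA_swap13]; exact hz
    have hybx : M.m y b x = M.m x y b := by
      rw [MA_swap13, M.swap23]
    rw [hyzx, hybx] at h
    calc M.m x z b = M.m z b x := by rw [M.swap12, M.swap23]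
      _ = M.m (M.m x y b) z x := h
  -- e5 : m x (m x z b) (m x y b) = m x z b
  have e5 : M.m x (M.m x z b) (M.m x y b) = M.m x z b := by
    have hu : M.m x z b = M.m x z (M.m x y b) := by
      rw [e4, MA_swap13]
    rw [hu]
    exact MA_gate M x z (M.m x y b)
  -- e6 : m (m x z b) a x = m x z b
  have e6 : M.m (M.m x z b) a x = M.m x z b := by
    have h := M.med_assoc (M.m x y b) (M.m x z b) a x
    have hcux : M.m (M.m x y b) (M.m x z b) x = M.m x z b := by
      rw [MA_swap13]; exact e5
    have hcax : M.m (M.m x y b) a x = M.m x y b := by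
      rw [MA_swap13, M.swap12]; exact e3
    rw [hcux, hcax, hcux] at h
    exact h
  -- e7 : m (m x z b) b a = a
  have e7 : M.m (M.m x z b) b a = a := by
    have h := M.med_assoc x (M.m x z b) b a
    have hxua : M.m x (M.m x z b) a = M.m x z b := by
      rw [M.swap12, M.swap23]; exact e6
    have hxba : M.m x b a = a := by
      rw [MA_swap13, M.swap23]; exact hx
    rw [hxua, hxba, MA_dup2] at h
    exact h
  -- e8 : m (m x z b) a b = b
  have e8 : M.m (M.m x z b) a b = b := by
    have h := M.med_assoc x z a b
    rw [hx', ht] at h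
    exact h
  calc a = M.m (M.m x z b) b a := e7.symm
    _ = M.m (M.m x z b) a b := by rw [M.swap23]
    _ = b := e8

end Aux

/-- For an adjacent pair `a ≠ b`, the two shadows form the unique wall of `X`
separating `a` and `b`. -/
theorem adjacent_unique_wall {X : Type*} (M : MedianAlgebra X) (a b : X)
    (hab : a ≠ b) (hadj : M.interval a b = {a, b}) :
    M.shadow b a ∩ M.shadow a b = ∅ ∧
    M.shadow b a ∪ M.shadow a b = Set.univ ∧
    M.IsConvex (M.shadow b a) ∧ M.IsConvex (M.shadow a b) ∧
    a ∈ M.shadow b a ∧ b ∈ M.shadow a b ∧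
    (∀ W₁ W₂ : Set X, M.IsConvex W₁ → M.IsConvex W₂ →
      W₁ ∩ W₂ = ∅ → W₁ ∪ W₂ = Set.univ →
      a ∈ W₁ → b ∈ W₂ → W₁ = M.shadow b a ∧ W₂ = M.shadow a b) := by
  -- dichotomy from adjacency
  have cover : ∀ w : X, M.m a w b = a ∨ M.m a w b = b := by
    intro w
    have hmem : M.m a w b ∈ M.interval a b := by
      show M.m a (M.m a w b) b = M.m a w b
      exact MA_gate M a w b
    rw [hadj] at hmem
    exact hmem
  have mem_ba : ∀ w : X, w ∈ M.shadow b a ↔ M.m a w b = a := by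
    intro w
    constructor
    · intro h; rw [MA_swap13]; exact h
    · intro h; show M.m b w a = a; rw [MA_swap13]; exact h
  have mem_ab : ∀ w : X, w ∈ M.shadow a b ↔ M.m a w b = b := by
    intro w; exact Iff.rfl
  -- disjointness
  have hdisj : M.shadow b a ∩ M.shadow a b = ∅ := by
    ext w
    simp only [Set.mem_inter_iff, Set.mem_empty_iff_false, iff_false, not_and]
    intro h1 h2
    exact hab (((mem_ba w).1 h1).symm.trans ((mem_ab w).1 h2))
  -- union
  have huniv : M.shadow b a ∪ M.shadow a b = Set.univ := by
    ext w
    simp only [Set.mem_union, Set.mem_univ, iff_true]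
    rcases cover w with h | h
    · exact Or.inl ((mem_ba w).2 h)
    · exact Or.inr ((mem_ab w).2 h)
  -- convexity of shadow b a
  have hconv_ba : M.IsConvex (M.shadow b a) := by
    intro x hx y hy z hz
    have hx' : M.m a x b = a := (mem_ba x).1 hx
    have hy' : M.m a y b = a := (mem_ba y).1 hy
    have hz' : M.m x z y = z := hz
    rcases cover z with h | h
    · exact (mem_ba z).2 h
    · exact absurd (MA_key M hx' hy' hz' h) hab
  -- convexity of shadow a b
  have hconv_ab : M.IsConvex (M.shadow a b) := by
    intro x hx y hy z hz
    have hx' : M.m b x a = b := by rw [MA_swap13]; exact (mem_ab x).1 hx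
    have hy' : M.m b y a = b := by rw [MA_swap13]; exact (mem_ab y).1 hy
    have hz' : M.m x z y = z := hz
    rcases cover z with h | h
    · have h' : M.m b z a = a := by rw [MA_swap13]; exact h
      exact absurd (MA_key M hx' hy' hz' h').symm hab
    · exact (mem_ab z).2 h
  have ha_mem : a ∈ M.shadow b a := by
    show M.m b a a = a
    exact M.absorb b a
  have hb_mem : b ∈ M.shadow a b := by
    show M.m a b b = b
    exact M.absorb a b
  refine ⟨hdisj, huniv, hconv_ba, hconv_ab, ha_mem, hb_mem, ?_⟩
  intro W₁ W₂ hc1 hc2 hd hu ha1 hb2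
  have hWdisj : ∀ w : X, w ∈ W₁ → w ∈ W₂ → False := by
    intro w h1 h2
    have : w ∈ W₁ ∩ W₂ := ⟨h1, h2⟩
    rw [hd] at this
    exact this
  have hWuniv : ∀ w : X, w ∈ W₁ ∨ w ∈ W₂ := by
    intro w
    have : w ∈ W₁ ∪ W₂ := by rw [hu]; trivial
    exact this
  have hsub1 : M.shadow b a ⊆ W₁ := by
    intro w hw
    have hwa : M.m w a b = a := by
      rw [M.swap12]; exact (mem_ba w).1 hw
    rcases hWuniv w with h | h
    · exact h
    · exfalso
      have : a ∈ M.interval w b := hwa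
      exact hWdisj a ha1 (hc2 w h b hb2 this)
  have hsub2 : M.shadow a b ⊆ W₂ := by
    intro w hw
    have hwb : M.m w b a = b := by
      rw [MA_swap13, M.swap23]; exact (mem_ab w).1 hw
    rcases hWuniv w with h | h
    · exfalso
      have : b ∈ M.interval w a := hwb
      exact hWdisj b (hc1 w h a ha1 this) hb2
    · exact h
  constructor
  · apply Set.Subset.antisymm _ hsub1
    intro w hw
    rcases cover w with h | h
    · exact (mem_ba w).2 h
    · exact absurd (hWdisj w hw (hsub2 ((mem_ab w).2 h))) not_false
  · apply Set.Subset.antisymm _ hsub2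
    intro w hw
    rcases cover w with h | h
    · exact absurd (hWdisj w (hsub1 ((mem_ba w).2 h)) hw) not_false
    · exact (mem_ab w).2 h
end
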